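/- There exists κ₀ > 0 such that for all κ ∈ (0, κ₀), the function Q(z; κ) = e^z (1 + z²/κ²) - (1 + z) has no roots z with Re z > 0. Specifically, any root with Re z > 0 and κ ∈ (0,1) satisfies |z| < 2κ, and then κ² Q = z²(1 + O(κ)) cannot vanish for small κ. -/

import Mathlib

/-- For all sufficiently small `κ > 0`, `Q(z;κ)` has no roots with `Re z > 0`. -/
theorem Q_no_unstable_roots_small_kappa :
    ∃ κ₀ : ℝ, 0 < κ₀ ∧ ∀ κ : ℝ, 0 < κ → κ < κ₀ → ∀ z : ℂ, 0 < z.re →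
      Complex.exp z * (1 + z ^ 2 / (κ : ℂ) ^ 2) - (1 + z) ≠ 0 := by
  refine ⟨1/2, by norm_num, fun κ hκ hκ' z hz hQ => ?_⟩
  have hκc : (κ : ℂ) ≠ 0 := by exact_mod_cast hκ.ne'
  have key : Complex.exp z * ((κ : ℂ) ^ 2 + z ^ 2) = (κ : ℂ) ^ 2 * (1 + z) := by
    have h' : Complex.exp z * (1 + z ^ 2 / (κ : ℂ) ^ 2) = 1 + z := sub_eq_zero.mp hQ
    field_simp at h'
    linear_combination h'
  have hez : ‖Complex.exp z‖ = Real.exp z.re := Complex.norm_exp z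
  have h1 : (1 : ℝ) < Real.exp z.re := by
    rw [show (1 : ℝ) = Real.exp 0 by simp]
    exact Real.exp_lt_exp.mpr hz
  have hzne : ‖z‖ ≠ 0 := by
    simp only [ne_eq, norm_eq_zero]
    intro h; rw [h] at hz; simp at hz
  have hzpos : 0 < ‖z‖ := (norm_nonneg z).lt_of_ne (Ne.symm hzne)
  have habs : Real.exp z.re * ‖(κ : ℂ) ^ 2 + z ^ 2‖
      = κ ^ 2 * ‖1 + z‖ := by
    have := congrArg norm key
    simpa [map_mul, hez, norm_pow, Complex.norm_real, abs_of_pos hκ] using this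
  by_cases hcase : ‖z‖ ≤ 2 * κ
  · -- small z case
    have key2 : z ^ 2 * Complex.exp z = -((κ : ℂ) ^ 2 * (Complex.exp z - 1 - z)) := by
      linear_combination key
    have habs2 : ‖z‖ ^ 2 * Real.exp z.re
        = κ ^ 2 * ‖Complex.exp z - 1 - z‖ := by
      have := congrArg norm key2
      simpa [map_mul, hez, norm_pow, Complex.norm_real, abs_of_pos hκ] using this
    have hzle1 : ‖z‖ ≤ 1 := hcase.trans (by linarith)
    have hbound := Complex.norm_exp_sub_one_sub_id_le hzle1
    have : ‖z‖ ^ 2 * Real.exp z.re ≤ κ ^ 2 * ‖z‖ ^ 2 := by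
      rw [habs2]
      exact mul_le_mul_of_nonneg_left hbound (by positivity)
    have hk1 : κ ^ 2 < 1 := by nlinarith
    have hsq : 0 < ‖z‖ ^ 2 := by positivity
    have hle : Real.exp z.re ≤ κ ^ 2 := by
      have h' : ‖z‖ ^ 2 * Real.exp z.re ≤ ‖z‖ ^ 2 * (κ ^ 2) := by
        linarith
      exact le_of_mul_le_mul_left h' hsq
    linarith
  · -- large z case
    push_neg at hcase
    have hlow : ‖z‖ ^ 2 - κ ^ 2 ≤ ‖(κ : ℂ) ^ 2 + z ^ 2‖ := by
      have h2 : ‖z ^ 2‖ ≤ ‖(κ : ℂ) ^ 2 + z ^ 2‖ + ‖(κ : ℂ) ^ 2‖ := by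
        calc ‖z ^ 2‖ = ‖((κ : ℂ) ^ 2 + z ^ 2) - (κ : ℂ) ^ 2‖ := by
              ring_nf
          _ ≤ _ := norm_sub_le _ _
      have h3 : ‖z ^ 2‖ = ‖z‖ ^ 2 := norm_pow z 2
      have h4 : ‖(κ : ℂ) ^ 2‖ = κ ^ 2 := by
        rw [norm_pow]
        simp [Complex.norm_real, abs_of_pos hκ]
      linarith
    have hup : ‖1 + z‖ ≤ 1 + ‖z‖ := by
      simpa using norm_add_le 1 z
    have hgap : κ ^ 2 * (1 + ‖z‖) < ‖z‖ ^ 2 - κ ^ 2 := by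
      nlinarith [mul_pos (sub_pos.mpr hcase) (show (0:ℝ) < ‖z‖ + κ by linarith)]
    have hpos : (0:ℝ) ≤ ‖z‖ ^ 2 - κ ^ 2 := by nlinarith
    have : κ ^ 2 * ‖1 + z‖ < Real.exp z.re * ‖(κ : ℂ) ^ 2 + z ^ 2‖ := by
      calc κ ^ 2 * ‖1 + z‖ ≤ κ ^ 2 * (1 + ‖z‖) := by nlinarith
        _ < ‖z‖ ^ 2 - κ ^ 2 := hgap
        _ ≤ ‖(κ : ℂ) ^ 2 + z ^ 2‖ := hlow
        _ ≤ Real.exp z.re * ‖(κ : ℂ) ^ 2 + z ^ 2‖ := by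
            nlinarith [norm_nonneg ((κ : ℂ) ^ 2 + z ^ 2)]
    rw [← habs] at this
    exact lt_irrefl _ this
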